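/- Let k be a field and A a finite-dimensional graded connected Hopf algebra over k (A_0 = k). Then A satisfies Poincaré duality: the graded dual Hom_k(A, k) is a free A-module of rank one. -/

import Mathlib

universe u

open Coalgebra HopfAlgebra TensorProduct
open scoped Coalgebra

section Aux

variable {k : Type u} [Field k] {A : Type u} [Ring A] [HopfAlgebra k A]

/-- Key Sweedler identity for a right integral: `Δ(t) * (a ⊗ 1) = Δ(t) * (1 ⊗ S a)`. -/
lemma integral_comul_right (t : A)
    (ht : ∀ a : A, t * a = counit (R := k) a • t) (a : A) :
    comul (R := k) t * (a ⊗ₜ[k] (1 : A)) =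
      comul (R := k) t * ((1 : A) ⊗ₜ[k] antipode (R := k) a) := by
  classical
  have h4 : ∀ b : A, comul (R := k) t * comul (R := k) b
      = counit (R := k) b • comul (R := k) t := by
    intro b
    rw [← Bialgebra.comul_mul, ht b, map_smul]
  set S : A →ₗ[k] A := antipode (R := k) with hS
  set τ : A ⊗[k] A := comul (R := k) t with hτ
  set r : Coalgebra.Repr k a (A × A) := ℛ k a with hr
  set r1 : ∀ i : r.ι, Coalgebra.Repr k (r.left i) (A × A) := fun i => ℛ k (r.left i) with hr1
  set r2 : ∀ i : r.ι, Coalgebra.Repr k (r.right i) (A × A) := fun i => ℛ k (r.right i) with hr2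
  have ha1 : ∑ i ∈ r.index, counit (R := k) (r.left i) • r.right i = a := by
    have h := Coalgebra.sum_counit_tmul_eq (R := k) r
    have h2 := congrArg (TensorProduct.lid k A) h
    simpa only [map_sum, TensorProduct.lid_tmul, one_smul] using h2
  have ha2 : ∑ i ∈ r.index, counit (R := k) (r.right i) • r.left i = a := by
    have h := Coalgebra.sum_tmul_counit_eq (R := k) r
    have h2 := congrArg (TensorProduct.rid k A) h
    simpa only [map_sum, TensorProduct.rid_tmul, one_smul] using h2
  have hX1 : ∑ i ∈ r.index, τ * comul (R := k) (r.left i) * ((1 : A) ⊗ₜ[k] S (r.right i)) =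
      τ * ((1 : A) ⊗ₜ[k] S a) := by
    calc ∑ i ∈ r.index, τ * comul (R := k) (r.left i) * ((1 : A) ⊗ₜ[k] S (r.right i))
        = ∑ i ∈ r.index, counit (R := k) (r.left i) •
            (τ * ((1 : A) ⊗ₜ[k] S (r.right i))) := by
          refine Finset.sum_congr rfl fun i _ => ?_
          rw [h4, smul_mul_assoc]
      _ = τ * ((1 : A) ⊗ₜ[k] S (∑ i ∈ r.index, counit (R := k) (r.left i) • r.right i)) := by
          simp only [map_sum, map_smul, tmul_sum, tmul_smul, Finset.mul_sum, mul_smul_comm]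
      _ = τ * ((1 : A) ⊗ₜ[k] S a) := by rw [ha1]
  have hY : ∑ i ∈ r.index, ∑ j ∈ (r1 i).index,
      (r1 i).left j ⊗ₜ[k] ((r1 i).right j * S (r.right i)) = a ⊗ₜ[k] (1 : A) := by
    have h3 := Coalgebra.sum_tmul_tmul_eq (R := k) r r1 r2
    apply_fun (LinearMap.lTensor A ((LinearMap.mul' k A) ∘ₗ (LinearMap.lTensor A S))) at h3
    simp only [map_sum, LinearMap.lTensor_tmul, LinearMap.comp_apply,
      LinearMap.mul'_apply] at h3
    rw [h3]
    have hterm : ∀ i ∈ r.index, ∑ j ∈ (r2 i).index,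
        r.left i ⊗ₜ[k] ((r2 i).left j * S ((r2 i).right j)) =
        counit (R := k) (r.right i) • (r.left i ⊗ₜ[k] (1 : A)) := by
      intro i _
      rw [← tmul_sum, HopfAlgebra.sum_mul_antipode_eq_smul (r2 i), tmul_smul]
    rw [Finset.sum_congr rfl hterm]
    have h5 := congrArg (fun z : A => z ⊗ₜ[k] (1 : A)) ha2
    simpa only [sum_tmul, smul_tmul'] using h5
  have hX2 : ∑ i ∈ r.index, τ * comul (R := k) (r.left i) * ((1 : A) ⊗ₜ[k] S (r.right i)) =
      τ * (a ⊗ₜ[k] (1 : A)) := by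
    rw [← hY, Finset.mul_sum]
    refine Finset.sum_congr rfl fun i _ => ?_
    rw [mul_assoc]
    congr 1
    rw [← (r1 i).eq, Finset.sum_mul]
    refine Finset.sum_congr rfl fun j _ => ?_
    rw [Algebra.TensorProduct.tmul_mul_tmul, mul_one]
  rw [← hX2, hX1]

/-- Key Sweedler identity for a left integral: `(1 ⊗ a) * Δ(t) = (S a ⊗ 1) * Δ(t)`. -/
lemma integral_comul_left (t : A)
    (ht : ∀ a : A, a * t = counit (R := k) a • t) (a : A) :
    ((1 : A) ⊗ₜ[k] a) * comul (R := k) t =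
      (antipode (R := k) a ⊗ₜ[k] (1 : A)) * comul (R := k) t := by
  classical
  have h4 : ∀ b : A, comul (R := k) b * comul (R := k) t
      = counit (R := k) b • comul (R := k) t := by
    intro b
    rw [← Bialgebra.comul_mul, ht b, map_smul]
  set S : A →ₗ[k] A := antipode (R := k) with hS
  set τ : A ⊗[k] A := comul (R := k) t with hτ
  set r : Coalgebra.Repr k a (A × A) := ℛ k a with hr
  set r1 : ∀ i : r.ι, Coalgebra.Repr k (r.left i) (A × A) := fun i => ℛ k (r.left i) with hr1
  set r2 : ∀ i : r.ι, Coalgebra.Repr k (r.right i) (A × A) := fun i => ℛ k (r.right i) with hr2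
  have ha1 : ∑ i ∈ r.index, counit (R := k) (r.left i) • r.right i = a := by
    have h := Coalgebra.sum_counit_tmul_eq (R := k) r
    have h2 := congrArg (TensorProduct.lid k A) h
    simpa only [map_sum, TensorProduct.lid_tmul, one_smul] using h2
  have ha2 : ∑ i ∈ r.index, counit (R := k) (r.right i) • r.left i = a := by
    have h := Coalgebra.sum_tmul_counit_eq (R := k) r
    have h2 := congrArg (TensorProduct.rid k A) h
    simpa only [map_sum, TensorProduct.rid_tmul, one_smul] using h2
  have hX1 : ∑ i ∈ r.index, (S (r.left i) ⊗ₜ[k] (1 : A)) * (comul (R := k) (r.right i) * τ) =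
      (S a ⊗ₜ[k] (1 : A)) * τ := by
    calc ∑ i ∈ r.index, (S (r.left i) ⊗ₜ[k] (1 : A)) * (comul (R := k) (r.right i) * τ)
        = ∑ i ∈ r.index, counit (R := k) (r.right i) •
            ((S (r.left i) ⊗ₜ[k] (1 : A)) * τ) := by
          refine Finset.sum_congr rfl fun i _ => ?_
          rw [h4, mul_smul_comm]
      _ = (S (∑ i ∈ r.index, counit (R := k) (r.right i) • r.left i) ⊗ₜ[k] (1 : A)) * τ := by
          simp only [map_sum, map_smul, sum_tmul, smul_tmul', Finset.sum_mul, smul_mul_assoc]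
          refine Finset.sum_congr rfl fun i _ => ?_
          rw [← smul_mul_assoc, smul_tmul']
      _ = (S a ⊗ₜ[k] (1 : A)) * τ := by rw [ha2]
  have hY : ∑ i ∈ r.index, ∑ j ∈ (r2 i).index,
      (S (r.left i) * (r2 i).left j) ⊗ₜ[k] (r2 i).right j = (1 : A) ⊗ₜ[k] a := by
    have h3 := Coalgebra.sum_tmul_tmul_eq (R := k) r r1 r2
    apply_fun ((LinearMap.rTensor A (LinearMap.mul' k A)) ∘ₗ
      (TensorProduct.assoc k A A A).symm.toLinearMap ∘ₗ
      (LinearMap.rTensor (A ⊗[k] A) S)) at h3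
    simp only [map_sum, LinearMap.comp_apply, LinearMap.rTensor_tmul,
      LinearEquiv.coe_coe, TensorProduct.assoc_symm_tmul, LinearMap.mul'_apply] at h3
    rw [← h3]
    have hterm : ∀ i ∈ r.index, ∑ j ∈ (r1 i).index,
        (S ((r1 i).left j) * (r1 i).right j) ⊗ₜ[k] r.right i =
        counit (R := k) (r.left i) • ((1 : A) ⊗ₜ[k] r.right i) := by
      intro i _
      rw [← sum_tmul, HopfAlgebra.sum_antipode_mul_eq_smul (r1 i), smul_tmul']
    rw [Finset.sum_congr rfl hterm]
    have h5 := congrArg (fun z : A => (1 : A) ⊗ₜ[k] z) ha1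
    simpa only [tmul_sum, tmul_smul] using h5
  have hX2 : ∑ i ∈ r.index, (S (r.left i) ⊗ₜ[k] (1 : A)) * (comul (R := k) (r.right i) * τ) =
      ((1 : A) ⊗ₜ[k] a) * τ := by
    rw [← hY, Finset.sum_mul]
    refine Finset.sum_congr rfl fun i _ => ?_
    rw [← mul_assoc]
    congr 1
    rw [← (r2 i).eq, Finset.mul_sum]
    refine Finset.sum_congr rfl fun j _ => ?_
    rw [Algebra.TensorProduct.tmul_mul_tmul, one_mul]
  rw [← hX2, hX1]

/-- The coherent-world core of Sweedler's theorem, with a purely ring-theoretic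
interface: there is a ring homomorphism `ε : A →+* k` (the counit) such that, whenever
`ker ε` consists of nilpotents and `t` is a nonzero two-sided annihilator of `ker ε`,
every right annihilator of `ker ε` is a multiple `z * t`. -/
lemma hopf_aux (k : Type u) [Field k] (A : Type u) [Ring A] [HopfAlgebra k A] :
    ∃ ε : A →+* k,
      ∀ (_ : ∀ x : A, ε x = 0 → IsNilpotent x) (t : A) (_ : t ≠ 0)
        (_ : ∀ y : A, ε y = 0 → t * y = 0) (_ : ∀ y : A, ε y = 0 → y * t = 0)
        (x : A), (∀ y : A, ε y = 0 → y * x = 0) → ∃ z : A, x = z * t := by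
  classical
  refine ⟨(Bialgebra.counitAlgHom k A).toRingHom, ?_⟩
  have hε : ∀ y : A, (Bialgebra.counitAlgHom k A).toRingHom y = counit (R := k) y :=
    fun _ => rfl
  intro hnil t ht0 htr htl x hx
  have hker : ∀ a : A, counit (R := k) (a - counit (R := k) a • (1 : A)) = 0 := by
    intro a
    rw [map_sub, map_smul, Bialgebra.counit_one, smul_eq_mul, mul_one, sub_self]
  have htr' : ∀ a : A, t * a = counit (R := k) a • t := by
    intro a
    have h := htr _ ((hε _).trans (hker a))
    rw [mul_sub, mul_smul_comm, mul_one, sub_eq_zero] at h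
    exact h
  have htl' : ∀ a : A, a * t = counit (R := k) a • t := by
    intro a
    have h := htl _ ((hε _).trans (hker a))
    rw [sub_mul, smul_mul_assoc, one_mul, sub_eq_zero] at h
    exact h
  set S : A →ₗ[k] A := antipode (R := k) with hS
  set rt : Coalgebra.Repr k t (A × A) := ℛ k t with hrt
  set η : Module.Dual k A → A := fun g => ∑ m ∈ rt.index, g (rt.left m) • rt.right m with hη
  -- η(g ∘ R_a) = η(g) * S(a)
  have hηR : ∀ (g : Module.Dual k A) (a : A),
      η (g.comp (LinearMap.mulRight k a)) = η g * S a := by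
    intro g a
    have key := integral_comul_right (k := k) t htr' a
    rw [← rt.eq] at key
    simp only [Finset.sum_mul, Algebra.TensorProduct.tmul_mul_tmul, mul_one, one_mul] at key
    apply_fun ((TensorProduct.lid k A).toLinearMap ∘ₗ LinearMap.rTensor A g) at key
    simp only [map_sum, LinearMap.comp_apply, LinearMap.rTensor_tmul,
      LinearEquiv.coe_coe, TensorProduct.lid_tmul] at key
    rw [hη]
    simp only [LinearMap.comp_apply, LinearMap.mulRight_apply]
    rw [key, Finset.sum_mul]
    exact Finset.sum_congr rfl fun m _ => (smul_mul_assoc _ _ _).symm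
  -- η(g ∘ L_{S a}) = a * η(g)
  have hηL : ∀ (g : Module.Dual k A) (a : A),
      η (g.comp (LinearMap.mulLeft k (S a))) = a * η g := by
    intro g a
    have key := integral_comul_left (k := k) t htl' a
    rw [← rt.eq] at key
    simp only [Finset.mul_sum, Finset.sum_mul, Algebra.TensorProduct.tmul_mul_tmul,
      mul_one, one_mul] at key
    apply_fun ((TensorProduct.lid k A).toLinearMap ∘ₗ LinearMap.rTensor A g) at key
    simp only [map_sum, LinearMap.comp_apply, LinearMap.rTensor_tmul,
      LinearEquiv.coe_coe, TensorProduct.lid_tmul] at key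
    rw [hη]
    simp only [LinearMap.comp_apply, LinearMap.mulLeft_apply]
    rw [← key, Finset.mul_sum]
    exact Finset.sum_congr rfl fun m _ => (mul_smul_comm _ _ _).symm
  -- ε(η g) = g t
  have hηε : ∀ g : Module.Dual k A, counit (R := k) (η g) = g t := by
    intro g
    have hlt : ∑ m ∈ rt.index, counit (R := k) (rt.right m) • rt.left m = t := by
      have h := Coalgebra.sum_tmul_counit_eq (R := k) rt
      have h2 := congrArg (TensorProduct.rid k A) h
      simpa only [map_sum, TensorProduct.rid_tmul, one_smul] using h2
    have h6 := congrArg g hlt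
    simp only [map_sum, map_smul, smul_eq_mul] at h6
    rw [hη]
    simp only [map_sum, map_smul, smul_eq_mul]
    rw [← h6]
    exact Finset.sum_congr rfl fun m _ => mul_comm _ _
  -- a functional with g₀ t = 1
  obtain ⟨g, hgt, -⟩ := Submodule.exists_dual_map_eq_bot_of_notMem
    (p := (⊥ : Submodule k A)) (x := t) (by simpa using ht0) inferInstance
  set g₀ : Module.Dual k A := (g t)⁻¹ • g with hg₀
  have hg₀t : g₀ t = 1 := by
    rw [hg₀]; simp [inv_mul_cancel₀ hgt]
  set x₁ := η g₀ with hx₁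
  have hx₁ε : counit (R := k) x₁ = 1 := by rw [hx₁, hηε, hg₀t]
  have hx₁u : IsUnit x₁ := by
    have hj : IsNilpotent (x₁ - 1) := by
      refine hnil _ ?_
      rw [hε, map_sub, hx₁ε]
      have : (Bialgebra.counitAlgHom k A).toRingHom (1 : A) = 1 := map_one _
      rw [hε] at this
      rw [this, sub_self]
    have := hj.isUnit_one_add
    simpa using this
  obtain ⟨v, hv⟩ := hx₁u
  set a₁ : A := ↑v⁻¹ with ha₁def
  have ha₁ : a₁ * x₁ = 1 := by rw [ha₁def, ← hv]; exact_mod_cast v.inv_mul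
  -- the Frobenius-type functional
  set lam : Module.Dual k A := g₀.comp (LinearMap.mulLeft k (S a₁)) with hlam
  have hηlam : η lam = 1 := by rw [hlam, hηL, ← hx₁, ha₁]
  have hrec : ∀ a : A, η (lam.comp (LinearMap.mulLeft k (S a))) = a := by
    intro a
    rw [hηL, hηlam, mul_one]
  have hSinj : Function.Injective (S : A → A) := by
    intro a a' h
    have h1 := hrec a
    rw [h, hrec a'] at h1
    exact h1.symm
  have hSr : ∀ a : A, η (lam.comp (LinearMap.mulRight k a)) = S a := by
    intro a
    rw [hηR, hηlam, one_mul]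
  have hnondeg : ∀ r : A, (∀ y : A, lam (y * r) = 0) → r = 0 := by
    intro r hr
    have hcomp : lam.comp (LinearMap.mulRight k r) = 0 := by
      ext y; simpa using hr y
    have h0 : S r = 0 := by
      rw [← hSr r, hcomp, hη]
      simp
    have : S r = S 0 := by rw [h0, map_zero]
    exact hSinj this
  -- the scalar-multiple property for y * x
  have hmulx : ∀ x' : A,
      (∀ y : A, (Bialgebra.counitAlgHom k A).toRingHom y = 0 → y * x' = 0) → ∀ y : A,
      y * x' = counit (R := k) y • x' := by
    intro x' hx' y
    have h := hx' _ ((hε _).trans (hker y))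
    rw [sub_mul, smul_mul_assoc, one_mul, sub_eq_zero] at h
    exact h
  have hlamt : lam t ≠ 0 := by
    intro h0
    refine ht0 (hnondeg t fun y => ?_)
    rw [htl' y, map_smul, h0, smul_zero]
  set c : k := lam x * (lam t)⁻¹ with hc
  have he2 : lam (x - c • t) = 0 := by
    rw [map_sub, map_smul, smul_eq_mul, hc, mul_assoc, inv_mul_cancel₀ hlamt, mul_one, sub_self]
  have hu : x - c • t = 0 := by
    refine hnondeg _ fun y => ?_
    have e1 : y * (x - c • t) = counit (R := k) y • (x - c • t) := by
      rw [mul_sub, hmulx x hx y, mul_smul_comm, htl' y, smul_sub, smul_comm]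
    rw [e1, map_smul, he2, smul_zero]
  refine ⟨algebraMap k A c, ?_⟩
  rw [← Algebra.smul_def, ← sub_eq_zero]
  exact hu

end Aux

theorem hopf_algebra_poincare_duality
    (k : Type u) [Field k] (A : Type u) [Ring A] [Algebra k A] [HopfAlgebra k A]
    (𝒜 : ℕ → Submodule k A) [GradedAlgebra 𝒜]
    (hconn : 𝒜 0 = Submodule.span k {(1 : A)})
    [FiniteDimensional k A] :
    ∃ ω : Module.Dual k A,
      Function.Bijective (fun r : A => ω.comp (LinearMap.mulRight k r)) := by
  classical
  by_cases h10 : (1 : A) = 0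
  · have hz : ∀ x : A, x = 0 := fun x => by
      rw [← mul_one x, h10, mul_zero]
    refine ⟨0, ?_, ?_⟩
    · intro r r' _
      rw [hz r, hz r']
    · intro g
      refine ⟨0, ?_⟩
      ext x
      rw [hz x]
      simp
  obtain ⟨ε, haux⟩ := hopf_aux k A
  -- the grading is bounded
  have indep : iSupIndep 𝒜 :=
    (DirectSum.Decomposition.isInternal 𝒜).submodule_iSupIndep
  haveI : Fintype {i // 𝒜 i ≠ ⊥} := indep.fintypeNeBotOfFiniteDimensional
  obtain ⟨N, hN⟩ : ∃ N : ℕ, ∀ i, N < i → 𝒜 i = ⊥ := by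
    refine ⟨(Finset.univ.image fun p : {i // 𝒜 i ≠ ⊥} => (p : ℕ)).sup id, fun i hi => ?_⟩
    by_contra hne
    have hmem : i ∈ Finset.univ.image fun p : {i // 𝒜 i ≠ ⊥} => (p : ℕ) :=
      Finset.mem_image.2 ⟨⟨i, hne⟩, Finset.mem_univ _, rfl⟩
    exact absurd (Finset.le_sup (f := id) hmem) (not_le.2 hi)
  -- the "high degree" filtration
  set Q : ℕ → Submodule k A := fun m => ⨆ i : {j : ℕ // m ≤ j}, 𝒜 i with hQ
  have h𝒜Q : ∀ m i, m ≤ i → 𝒜 i ≤ Q m := fun m i him =>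
    le_iSup (fun i : {j : ℕ // m ≤ j} => 𝒜 i) ⟨i, him⟩
  have hQbot : Q (N + 1) = ⊥ := by
    refine le_bot_iff.1 (iSup_le fun i => ?_)
    rw [hN i (Nat.lt_of_lt_of_le (Nat.lt_succ_self N) i.2)]
  have hQmul : ∀ m n, Q m * Q n ≤ Q (m + n) := by
    intro m n
    rw [Submodule.mul_le]
    intro x hx y hy
    refine Submodule.iSup_induction (x := x)
      (fun i : {j : ℕ // m ≤ j} => 𝒜 i) hx (motive := fun x => x * y ∈ Q (m + n)) ?_ ?_ ?_
    · intro i xx hxi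
      refine Submodule.iSup_induction (x := y)
        (fun i : {j : ℕ // n ≤ j} => 𝒜 i) hy (motive := fun y => xx * y ∈ Q (m + n)) ?_ ?_ ?_
      · intro jj yy hyj
        exact h𝒜Q (m + n) (i.1 + jj.1) (Nat.add_le_add i.2 jj.2)
          (SetLike.mul_mem_graded hxi hyj)
      · simpa using Submodule.zero_mem (Q (m + n))
      · intro y₁ y₂ h₁ h₂
        simpa [mul_add] using Submodule.add_mem _ h₁ h₂
    · simpa using Submodule.zero_mem (Q (m + n))
    · intro x₁ x₂ h₁ h₂
      simpa [add_mul] using Submodule.add_mem _ h₁ h₂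
  -- ε kills positive degrees
  have hcz : ∀ i : ℕ, 0 < i → ∀ x ∈ 𝒜 i, ε x = 0 := by
    intro i hi x hx
    have hpow : x ^ (N + 1) = 0 := by
      have hmem := SetLike.pow_mem_graded (N + 1) hx
      have hb : 𝒜 ((N + 1) • i) = ⊥ := hN _ (by
        have h1 : N + 1 ≤ (N + 1) * i := Nat.le_mul_of_pos_right _ hi
        simpa [smul_eq_mul] using Nat.lt_of_lt_of_le (Nat.lt_succ_self N) h1)
      rw [hb] at hmem
      simpa using hmem
    have h2 : ε x ^ (N + 1) = 0 := by
      rw [← map_pow, hpow, map_zero]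
    exact pow_eq_zero_iff (Nat.succ_ne_zero N) |>.1 h2
  -- the augmentation ideal as an M1-submodule
  set K : Submodule k A :=
    { carrier := {x : A | ε x = 0}
      add_mem' := by intro a b ha hb; simp only [Set.mem_setOf_eq] at *
                     rw [map_add, ha, hb, add_zero]
      zero_mem' := by simp only [Set.mem_setOf_eq]; exact map_zero ε
      smul_mem' := by
        intro cc x hxmem
        simp only [Set.mem_setOf_eq] at *
        rw [Algebra.smul_def, map_mul, hxmem, mul_zero] } with hKdef
  have hKmem : ∀ x : A, x ∈ K ↔ ε x = 0 := fun x => Iff.rfl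
  have hQ1K : Q 1 ≤ K := by
    refine iSup_le fun i => fun x hx => ?_
    exact (hKmem x).2 (hcz i.1 (Nat.lt_of_lt_of_le Nat.zero_lt_one i.2) x hx)
  have hφinj : Function.Injective (ε.comp (algebraMap k A)) :=
    (ε.comp (algebraMap k A)).injective
  -- decomposition of an arbitrary element
  have hdec : ∀ a : A, ∃ c : k, a - c • (1 : A) ∈ Q 1 := by
    intro a
    have hsum := DirectSum.sum_support_decompose 𝒜 a
    set d := DirectSum.decompose 𝒜 a with hd
    have hrest : ∑ i ∈ (d.support).erase 0, (d i : A) ∈ Q 1 := by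
      refine Submodule.sum_mem _ fun i hi => ?_
      exact h𝒜Q 1 i (Nat.one_le_iff_ne_zero.2 (Finset.ne_of_mem_erase hi))
        (SetLike.coe_mem (d i))
    have hsplit : a = (d 0 : A) + ∑ i ∈ (d.support).erase 0, (d i : A) := by
      by_cases h0 : 0 ∈ d.support
      · rw [← Finset.add_sum_erase _ _ h0] at hsum
        exact hsum.symm
      · have hz : (d 0 : A) = 0 := by
          simpa using (DFinsupp.notMem_support_iff.1 h0)
        rw [hz, zero_add, Finset.erase_eq_of_notMem h0]
        exact hsum.symm
    obtain ⟨c, hc⟩ : ∃ c : k, c • (1 : A) = (d 0 : A) := by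
      obtain ⟨x0, hx0mem, hx0eq⟩ : ∃ x0 : A, x0 ∈ 𝒜 0 ∧ x0 = (d 0 : A) :=
        ⟨(d 0 : A), SetLike.coe_mem _, rfl⟩
      rw [hconn] at hx0mem
      obtain ⟨c, hc⟩ := Submodule.mem_span_singleton.1 hx0mem
      exact ⟨c, by rw [hc, hx0eq]⟩
    refine ⟨c, ?_⟩
    rw [hsplit, hc]
    simpa using hrest
  have hKQ1 : K ≤ Q 1 := by
    intro a ha
    obtain ⟨c, hc⟩ := hdec a
    have hεc : ε (a - c • (1 : A)) = 0 := (hKmem _).1 (hQ1K hc)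
    have hεa : ε a = 0 := (hKmem a).1 ha
    have : ε.comp (algebraMap k A) c = 0 := by
      have h1 : ε (c • (1 : A)) = ε.comp (algebraMap k A) c := by
        rw [Algebra.smul_def, mul_one]; rfl
      have h2 : ε (c • (1 : A)) = 0 := by
        have := sub_eq_zero.2 (rfl : ε a = ε a)
        rw [map_sub, hεa, zero_sub, neg_eq_zero] at hεc
        rw [hεc]
      rw [← h1, h2]
    have hc0 : c = 0 := hφinj (by rw [this, map_zero])
    rw [hc0, zero_smul, sub_zero] at hc
    exact hc
  -- nilpotency
  have hQ1pow : ∀ m : ℕ, Q 1 ^ (m + 1) ≤ Q (m + 1) := by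
    intro m
    induction m with
    | zero => rw [pow_one]
    | succ n ih =>
        calc Q 1 ^ (n + 2) = Q 1 ^ (n + 1) * Q 1 := by rw [pow_succ]
          _ ≤ Q (n + 1) * Q 1 := mul_le_mul' ih le_rfl
          _ ≤ Q (n + 2) := hQmul (n + 1) 1
  have hKpow : ∀ m : ℕ, K ^ (m + 1) ≤ Q (m + 1) := by
    intro m
    refine le_trans ?_ (hQ1pow m)
    induction (m + 1) with
    | zero => simp
    | succ n ih => rw [pow_succ, pow_succ]; exact mul_le_mul' ih hKQ1
  have hKbot : K ^ (N + 1) = ⊥ := by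
    refine le_bot_iff.1 ?_
    rw [← hQbot]
    exact hKpow N
  have hnil : ∀ x : A, ε x = 0 → IsNilpotent x := by
    intro x hxε
    refine ⟨N + 1, ?_⟩
    have h1 : x ^ (N + 1) ∈ Q 1 ^ (N + 1) :=
      Submodule.pow_mem_pow _ (hKQ1 ((hKmem x).2 hxε)) (N + 1)
    have h2 := hQ1pow N h1
    rw [hQbot] at h2
    simpa using h2
  -- the two-sided integral t
  have hfind : ∃ m, K ^ m = ⊥ := ⟨N + 1, hKbot⟩
  set m₀ := Nat.find hfind with hm₀
  have hm₀0 : m₀ ≠ 0 := by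
    intro h
    have h0 := Nat.find_spec hfind
    rw [← hm₀, h, pow_zero, Submodule.one_eq_span] at h0
    exact h10 (Submodule.span_singleton_eq_bot.1 h0)
  obtain ⟨m', hm'⟩ : ∃ m', m₀ = m' + 1 := ⟨m₀ - 1, (Nat.succ_pred_eq_of_ne_zero hm₀0).symm⟩
  have hKm' : K ^ m' ≠ ⊥ := Nat.find_min hfind (by omega)
  obtain ⟨t, htK, ht0⟩ := Submodule.exists_mem_ne_zero_of_ne_bot hKm'
  have htr : ∀ y : A, ε y = 0 → t * y = 0 := by
    intro y hy
    have h1 : t * y ∈ K ^ m₀ := by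
      rw [hm', pow_succ]
      exact Submodule.mul_mem_mul htK ((hKmem y).2 hy)
    rw [Nat.find_spec hfind] at h1
    simpa using h1
  have htl : ∀ y : A, ε y = 0 → y * t = 0 := by
    intro y hy
    have h1 : y * t ∈ K ^ m₀ := by
      rw [hm', pow_succ']
      exact Submodule.mul_mem_mul ((hKmem y).2 hy) htK
    rw [Nat.find_spec hfind] at h1
    simpa using h1
  -- the socle is the line spanned by t
  have hsoc : ∀ x : A, (∀ y : A, ε y = 0 → y * x = 0) → ∃ c : k, x = c • t := by
    intro x hx
    obtain ⟨z, hz⟩ := haux hnil t ht0 htr htl x hx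
    obtain ⟨c, hcz⟩ := hdec z
    refine ⟨c, ?_⟩
    have hw : (z - c • (1 : A)) * t = 0 :=
      htl _ ((hKmem _).1 (hQ1K hcz))
    have : z * t = c • t := by
      have := sub_mul z (c • (1 : A)) t
      rw [hw, smul_mul_assoc, one_mul] at this
      exact (sub_eq_zero.1 this.symm)
    rw [hz, this]
  -- the Frobenius functional
  obtain ⟨g, hgt, -⟩ := Submodule.exists_dual_map_eq_bot_of_notMem
    (p := (⊥ : Submodule k A)) (x := t) (by simpa using ht0) inferInstance
  set ω : Module.Dual k A := (g t)⁻¹ • g with hω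
  have hωt : ω t = 1 := by
    rw [hω]; simp [inv_mul_cancel₀ hgt]
  -- right nondegeneracy
  have hrnd : ∀ r : A, r ≠ 0 → ∃ u : A, ω (u * r) ≠ 0 := by
    intro r hr
    have hPfind : ∃ n, ∀ u ∈ K ^ n, u * r = 0 := by
      refine ⟨N + 1, fun u hu => ?_⟩
      rw [hKbot] at hu
      rw [(Submodule.mem_bot k).1 hu, zero_mul]
    set n₁ := Nat.find hPfind with hn₁
    have h1K0 : (1 : A) ∈ K ^ 0 := by
      rw [pow_zero, Submodule.one_eq_span]
      exact Submodule.mem_span_singleton_self _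
    have hn₁0 : n₁ ≠ 0 := by
      intro h
      have h0 := Nat.find_spec hPfind
      rw [← hn₁, h] at h0
      exact hr (by simpa using h0 1 h1K0)
    obtain ⟨n', hn'⟩ : ∃ n', n₁ = n' + 1 := ⟨n₁ - 1, (Nat.succ_pred_eq_of_ne_zero hn₁0).symm⟩
    have hnotall : ¬ (∀ u ∈ K ^ n', u * r = 0) := Nat.find_min hPfind (by omega)
    push_neg at hnotall
    obtain ⟨u, huK, hur⟩ := hnotall
    have hsocmem : ∀ y : A, ε y = 0 → y * (u * r) = 0 := by
      intro y hy
      have h1 : y * u ∈ K ^ n₁ := by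
        rw [hn', pow_succ']
        exact Submodule.mul_mem_mul ((hKmem y).2 hy) huK
      rw [← mul_assoc]
      exact Nat.find_spec hPfind _ h1
    obtain ⟨c, hc⟩ := hsoc _ hsocmem
    have hcne : c ≠ 0 := by
      intro h
      rw [h, zero_smul] at hc
      exact hur hc
    refine ⟨u, ?_⟩
    rw [hc, map_smul, hωt, smul_eq_mul, mul_one]
    exact hcne
  -- conclusion
  have hΦinj : Function.Injective (fun r : A => ω.comp (LinearMap.mulRight k r)) := by
    intro r r' h
    by_contra hne
    have hd : r - r' ≠ 0 := sub_ne_zero.2 hne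
    obtain ⟨u, hu⟩ := hrnd _ hd
    apply hu
    have happ : ω (u * r) = ω (u * r') := by
      have := congrArg (fun φ : Module.Dual k A => φ u) h
      simpa using this
    rw [mul_sub, map_sub, happ, sub_self]
  set Φ : A →ₗ[k] Module.Dual k A :=
    { toFun := fun r => ω.comp (LinearMap.mulRight k r)
      map_add' := by
        intro r s
        ext xx
        simp [mul_add]
      map_smul' := by
        intro cc r
        ext xx
        simp [mul_smul_comm] } with hΦ
  have hΦinj' : Function.Injective Φ := hΦinj
  have hfr : Module.finrank k A = Module.finrank k (Module.Dual k A) :=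
    (Subspace.dual_finrank_eq).symm
  have hΦsurj : Function.Surjective Φ :=
    (LinearMap.injective_iff_surjective_of_finrank_eq_finrank hfr).1 hΦinj'
  exact ⟨ω, hΦinj, hΦsurj⟩
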